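/- Let V be a finite-dimensional real inner product space, M, K : V → V self-adjoint with M positive definite and K positive semidefinite. Let S ⊆ V be a subspace and R : V → S a linear map with the Galerkin property ⟨K (R v − v), s⟩ = 0 for all v ∈ V, s ∈ S. Let T > 0, N ≥ 2, τ := T/N, t_n := n τ. Let f : [0,T] → V be C² and u : [0,T] → V be C⁴ with M u''(t) + K u(t) = M f(t) on [0,T]. Assume there are constants C_R, H > 0 with, for all t ∈ [0,T]: (i) |R u(t) − u(t)|_K ≤ C_R H (|f(t) − u''(t)|_M + |u(t)|_K); (ii) |R u''(t) − u''(t)|_M ≤ C_R H |u''(t)|_K; and (iii) |R u'(t) − u'(t)|_M ≤ C_R H |u'(t)|_K. Let (u^n)_{n=0}^N ⊂ S satisfy ⟨M (u^{n+1} − 2u^n + u^{n−1})/τ² + K (u^{n+1} + 2u^n + u^{n−1})/4 − M f(t_n), v⟩ = 0 for all v ∈ S and 1 ≤ n ≤ N−1. Then there is a constant C depending only on C_R such that max_{1≤n≤N−1} |(u^{n+1} − u^n)/τ − u'(t_n + τ/2)|_M ≤ C [ |(u^1 − u^0)/τ − R((u(t_1) − u(t_0))/τ)|_M + |(u^1 +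 u^0)/2 − R((u(t_1) + u(t_0))/2)|_K + τ² ( ∫₀^T |u''''(s)|_M ds + ∫₀^T |f''(s)|_M ds + H ∫₀^T |u''(s)|_K ds + sup_{[0,T]} |u'''|_M ) + H ( (T + τ) sup_{[0,T]} |u''|_K + sup_{[0,T]} |u'|_K ) ]. -/

import Mathlib

open scoped RealInnerProductSpace

/-- The (semi)norm `|v|_A := ⟨A v, v⟩^{1/2}` induced by a linear operator `A`. -/
noncomputable def opSemiNorm {V : Type*} [NormedAddCommGroup V] [InnerProductSpace ℝ V]
    (A : V →ₗ[ℝ] V) (v : V) : ℝ :=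
  Real.sqrt ⟪A v, v⟫

open intervalIntegral MeasureTheory

section aux
variable {V : Type*} [NormedAddCommGroup V] [InnerProductSpace ℝ V]
variable {A : V →ₗ[ℝ] V}

lemma sn_nonneg (A : V →ₗ[ℝ] V) (v : V) : 0 ≤ opSemiNorm A v := Real.sqrt_nonneg _

lemma sn_sq (hpos : ∀ x : V, 0 ≤ ⟪A x, x⟫) (v : V) : (opSemiNorm A v) ^ 2 = ⟪A v, v⟫ :=
  Real.sq_sqrt (hpos v)

lemma sn_cs (hsym : ∀ x y : V, ⟪A x, y⟫ = ⟪x, A y⟫) (hpos : ∀ x : V, 0 ≤ ⟪A x, x⟫)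
    (x y : V) : ⟪A x, y⟫ ≤ opSemiNorm A x * opSemiNorm A y := by
  have key : ∀ t : ℝ, 0 ≤ ⟪A y, y⟫ * (t * t) + (2 * ⟪A x, y⟫) * t + ⟪A x, x⟫ := by
    intro t
    have h0 := hpos (x + t • y)
    have e1 : ⟪A (x + t • y), x + t • y⟫
        = ⟪A x, x⟫ + t * ⟪A x, y⟫ + t * ⟪A y, x⟫ + t * t * ⟪A y, y⟫ := by
      simp only [map_add, LinearMap.map_smul, inner_add_left, inner_add_right, inner_smul_left,
        inner_smul_right, RCLike.ofReal_real_eq_id, id, conj_trivial]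
      ring
    have e2 : ⟪A y, x⟫ = ⟪A x, y⟫ := by
      rw [hsym y x, real_inner_comm]
    rw [e1, e2] at h0
    nlinarith [h0]
  have hd := discrim_le_zero key
  have hdd : discrim ⟪A y, y⟫ (2 * ⟪A x, y⟫) ⟪A x, x⟫ ≤ 0 := hd
  rw [discrim] at hdd
  have h1 : ⟪A x, y⟫ ^ 2 ≤ (opSemiNorm A x * opSemiNorm A y) ^ 2 := by
    have : (opSemiNorm A x * opSemiNorm A y) ^ 2 = ⟪A x, x⟫ * ⟪A y, y⟫ := by
      rw [mul_pow, sn_sq hpos, sn_sq hpos]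
    nlinarith
  have h2 : 0 ≤ opSemiNorm A x * opSemiNorm A y :=
    mul_nonneg (sn_nonneg A x) (sn_nonneg A y)
  nlinarith [h1, h2]

lemma sn_add_le (hsym : ∀ x y : V, ⟪A x, y⟫ = ⟪x, A y⟫) (hpos : ∀ x : V, 0 ≤ ⟪A x, x⟫)
    (x y : V) : opSemiNorm A (x + y) ≤ opSemiNorm A x + opSemiNorm A y := by
  have h : (opSemiNorm A (x + y)) ^ 2 ≤ (opSemiNorm A x + opSemiNorm A y) ^ 2 := by
    rw [sn_sq hpos]
    have e1 : ⟪A (x + y), x + y⟫ = ⟪A x, x⟫ + ⟪A x, y⟫ + ⟪A y, x⟫ + ⟪A y, y⟫ := by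
      simp only [map_add, inner_add_left, inner_add_right]; ring
    have e2 : ⟪A y, x⟫ = ⟪A x, y⟫ := by rw [hsym y x, real_inner_comm]
    have hcs := sn_cs hsym hpos x y
    have hx := sn_sq hpos x
    have hy := sn_sq hpos y
    nlinarith [hcs, hx, hy]
  have h2 : 0 ≤ opSemiNorm A x + opSemiNorm A y :=
    add_nonneg (sn_nonneg A x) (sn_nonneg A y)
  nlinarith [sn_nonneg A (x + y)]

lemma sn_smul (A : V →ₗ[ℝ] V) (c : ℝ) (x : V) :
    opSemiNorm A (c • x) = |c| * opSemiNorm A x := by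
  unfold opSemiNorm
  rw [LinearMap.map_smul, inner_smul_left, inner_smul_right]
  simp only [RCLike.ofReal_real_eq_id, id, conj_trivial]
  rw [← mul_assoc, ← Real.sqrt_sq_eq_abs, ← Real.sqrt_mul (by positivity)]
  ring_nf

lemma sn_neg (A : V →ₗ[ℝ] V) (x : V) : opSemiNorm A (-x) = opSemiNorm A x := by
  have := sn_smul A (-1) x; simpa using this

lemma sn_sub_le (hsym : ∀ x y : V, ⟪A x, y⟫ = ⟪x, A y⟫) (hpos : ∀ x : V, 0 ≤ ⟪A x, x⟫)
    (x y : V) : opSemiNorm A (x - y) ≤ opSemiNorm A x + opSemiNorm A y := by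
  rw [sub_eq_add_neg]
  calc opSemiNorm A (x + -y) ≤ opSemiNorm A x + opSemiNorm A (-y) := sn_add_le hsym hpos x (-y)
    _ = opSemiNorm A x + opSemiNorm A y := by rw [sn_neg]

end aux

section integral
variable {V : Type*} [NormedAddCommGroup V] [InnerProductSpace ℝ V] [CompleteSpace V]
variable {A : V →ₗ[ℝ] V}

lemma sn_continuous (hA : Continuous fun v : V => A v) {w : ℝ → V} (hw : Continuous w) :
    Continuous fun s => opSemiNorm A (w s) :=
  Real.continuous_sqrt.comp ((hA.comp hw).inner hw)

lemma sn_integral_le (hsym : ∀ x y : V, ⟪A x, y⟫ = ⟪x, A y⟫)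
    (hpos : ∀ x : V, 0 ≤ ⟪A x, x⟫) (hA : Continuous fun v : V => A v)
    {a b : ℝ} (hab : a ≤ b) {w : ℝ → V} (hw : Continuous w) :
    opSemiNorm A (∫ s in a..b, w s) ≤ ∫ s in a..b, opSemiNorm A (w s) := by
  set I := ∫ s in a..b, w s with hI
  have hInt : IntervalIntegrable w volume a b := hw.intervalIntegrable a b
  have hRHSnn : 0 ≤ ∫ s in a..b, opSemiNorm A (w s) :=
    intervalIntegral.integral_nonneg hab (fun s _ => sn_nonneg A (w s))
  rcases eq_or_lt_of_le (sn_nonneg A I) with h0 | h0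
  · rw [← h0]; exact hRHSnn
  have h1 : ⟪A I, I⟫ = ∫ s in a..b, ⟪A I, w s⟫ := by
    have := (innerSL ℝ (A I)).intervalIntegral_comp_comm hInt
    simpa using this.symm
  have h2 : (∫ s in a..b, ⟪A I, w s⟫) ≤ ∫ s in a..b, opSemiNorm A (w s) * opSemiNorm A I := by
    apply intervalIntegral.integral_mono_on hab
    · exact (Continuous.intervalIntegrable (by exact ((hA.comp continuous_const).inner hw)) a b)
    · exact (Continuous.intervalIntegrable (((sn_continuous hA hw).mul continuous_const)) a b)
    · intro s _
      calc ⟪A I, w s⟫ = ⟪A (w s), I⟫ := by rw [hsym, real_inner_comm]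
        _ ≤ opSemiNorm A (w s) * opSemiNorm A I := sn_cs hsym hpos _ _
  rw [intervalIntegral.integral_mul_const] at h2
  have h3 : (opSemiNorm A I) ^ 2 ≤ (∫ s in a..b, opSemiNorm A (w s)) * opSemiNorm A I := by
    rw [sn_sq hpos]; rw [h1]; exact h2
  nlinarith [h0, h3]

end integral

section taylor
variable {V : Type*} [NormedAddCommGroup V] [NormedSpace ℝ V] [CompleteSpace V]

lemma taylor_step (a b c : ℝ) (m : ℕ) {w w' : ℝ → V}
    (hw : ∀ t, HasDerivAt w (w' t) t) (hwc : Continuous w) (hw'c : Continuous w') :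
    ∫ s in a..b, (c * (b - s) ^ m) • w s
      = (c * (b - a) ^ (m + 1) / ((m : ℝ) + 1)) • w a
        + ∫ s in a..b, (c * (b - s) ^ (m + 1) / ((m : ℝ) + 1)) • w' s := by
  have hm1 : ((m : ℝ) + 1) ≠ 0 := by positivity
  have hφ : ∀ s : ℝ, HasDerivAt (fun s => c * (b - s) ^ (m + 1) / ((m : ℝ) + 1))
      (-(c * (b - s) ^ m)) s := by
    intro s
    have h1 : HasDerivAt (fun s : ℝ => b - s) (-1) s := (hasDerivAt_id s).const_sub b
    have h2 := h1.pow (m + 1)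
    have h3 := (h2.const_mul c).div_const ((m : ℝ) + 1)
    convert h3 using 1
    · rfl
    · rfl
    · rfl
    push_cast
    rw [eq_div_iff hm1]
    ring
  have key : ∀ s ∈ Set.uIcc a b,
      HasDerivAt (fun s => (c * (b - s) ^ (m + 1) / ((m : ℝ) + 1)) • w s)
        ((c * (b - s) ^ (m + 1) / ((m : ℝ) + 1)) • w' s + (-(c * (b - s) ^ m)) • w s) s :=
    fun s _ => (hφ s).smul (hw s)
  have c1 : Continuous fun s => (-(c * (b - s) ^ m)) • w s := by fun_prop
  have c2 : Continuous fun s => (c * (b - s) ^ (m + 1) / ((m : ℝ) + 1)) • w' s := by fun_prop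
  have hint : IntervalIntegrable
      (fun s => (c * (b - s) ^ (m + 1) / ((m : ℝ) + 1)) • w' s + (-(c * (b - s) ^ m)) • w s)
      volume a b := ((c2.add c1).intervalIntegrable a b)
  have hftc := intervalIntegral.integral_eq_sub_of_hasDerivAt key hint
  rw [intervalIntegral.integral_add (c2.intervalIntegrable a b) (c1.intervalIntegrable a b)]
    at hftc
  have hb0 : (c * (b - b) ^ (m + 1) / ((m : ℝ) + 1)) • w b = 0 := by
    simp [sub_self, zero_pow (Nat.succ_ne_zero m)]
  rw [hb0] at hftc
  have hneg : (∫ s in a..b, (-(c * (b - s) ^ m)) • w s)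
      = -∫ s in a..b, (c * (b - s) ^ m) • w s := by
    simp [neg_smul, intervalIntegral.integral_neg]
  rw [hneg, zero_sub] at hftc
  -- hftc : (∫ φ•w') + (-∫ k•w) = -(φ a • w a)
  have h2 : (∫ s in a..b, (c * (b - s) ^ m) • w s)
      - (∫ s in a..b, (c * (b - s) ^ (m + 1) / ((m : ℝ) + 1)) • w' s)
      = (c * (b - a) ^ (m + 1) / ((m : ℝ) + 1)) • w a := by
    have h3 : (∫ s in a..b, (c * (b - s) ^ (m + 1) / ((m : ℝ) + 1)) • w' s)
        - (∫ s in a..b, (c * (b - s) ^ m) • w s)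
        = -((c * (b - a) ^ (m + 1) / ((m : ℝ) + 1)) • w a) := by
      rw [sub_eq_add_neg]; exact hftc
    rw [← neg_sub, h3, neg_neg]
  rw [sub_eq_iff_eq_add] at h2
  rw [h2]

lemma taylor1' {g g1 : ℝ → V} (h1 : ∀ t, HasDerivAt g (g1 t) t)
    (hc1 : Continuous g1) (a b : ℝ) :
    g b = g a + ∫ s in a..b, g1 s := by
  have := intervalIntegral.integral_eq_sub_of_hasDerivAt (fun s _ => h1 s)
    (hc1.intervalIntegrable a b)
  rw [this]; abel

lemma taylor2' {g g1 g2 : ℝ → V} (h1 : ∀ t, HasDerivAt g (g1 t) t)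
    (h2 : ∀ t, HasDerivAt g1 (g2 t) t) (hc1 : Continuous g1) (hc2 : Continuous g2) (a b : ℝ) :
    g b = g a + (b - a) • g1 a + ∫ s in a..b, (b - s) • g2 s := by
  have e0 : (∫ s in a..b, g1 s) = ∫ s in a..b, ((1 : ℝ) * (b - s) ^ 0) • g1 s := by
    apply intervalIntegral.integral_congr; intro s _; simp
  have step := taylor_step a b 1 0 h2 hc1 hc2
  have e1 : (∫ s in a..b, ((1 : ℝ) * (b - s) ^ (0 + 1) / ((0 : ℕ) + 1 : ℝ)) • g2 s)
      = ∫ s in a..b, (b - s) • g2 s := by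
    apply intervalIntegral.integral_congr; intro s _; norm_num
  have e2 : ((1 : ℝ) * (b - a) ^ (0 + 1) / ((0 : ℕ) + 1 : ℝ)) • g1 a = (b - a) • g1 a := by
    norm_num
  rw [taylor1' h1 hc1 a b, e0, step, e1, e2, add_assoc]

lemma taylor3' {g g1 g2 g3 : ℝ → V} (h1 : ∀ t, HasDerivAt g (g1 t) t)
    (h2 : ∀ t, HasDerivAt g1 (g2 t) t) (h3 : ∀ t, HasDerivAt g2 (g3 t) t)
    (hc1 : Continuous g1) (hc2 : Continuous g2) (hc3 : Continuous g3) (a b : ℝ) :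
    g b = g a + (b - a) • g1 a + ((b - a) ^ 2 / 2) • g2 a
      + ∫ s in a..b, ((b - s) ^ 2 / 2) • g3 s := by
  have e0 : (∫ s in a..b, (b - s) • g2 s) = ∫ s in a..b, ((1 : ℝ) * (b - s) ^ 1) • g2 s := by
    apply intervalIntegral.integral_congr; intro s _; norm_num
  have step := taylor_step a b 1 1 h3 hc2 hc3
  have e1 : (∫ s in a..b, ((1 : ℝ) * (b - s) ^ (1 + 1) / ((1 : ℕ) + 1 : ℝ)) • g3 s)
      = ∫ s in a..b, ((b - s) ^ 2 / 2) • g3 s := by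
    apply intervalIntegral.integral_congr; intro s _; norm_num
  have e2 : ((1 : ℝ) * (b - a) ^ (1 + 1) / ((1 : ℕ) + 1 : ℝ)) • g2 a
      = ((b - a) ^ 2 / 2) • g2 a := by norm_num
  rw [taylor2' h1 h2 hc1 hc2 a b, e0, step, e1, e2]; abel

lemma taylor4' {g g1 g2 g3 g4 : ℝ → V} (h1 : ∀ t, HasDerivAt g (g1 t) t)
    (h2 : ∀ t, HasDerivAt g1 (g2 t) t) (h3 : ∀ t, HasDerivAt g2 (g3 t) t)
    (h4 : ∀ t, HasDerivAt g3 (g4 t) t)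
    (hc1 : Continuous g1) (hc2 : Continuous g2) (hc3 : Continuous g3) (hc4 : Continuous g4)
    (a b : ℝ) :
    g b = g a + (b - a) • g1 a + ((b - a) ^ 2 / 2) • g2 a + ((b - a) ^ 3 / 6) • g3 a
      + ∫ s in a..b, ((b - s) ^ 3 / 6) • g4 s := by
  have e0 : (∫ s in a..b, ((b - s) ^ 2 / 2) • g3 s)
      = ∫ s in a..b, ((2 : ℝ)⁻¹ * (b - s) ^ 2) • g3 s := by
    apply intervalIntegral.integral_congr; intro s _
    norm_num [div_eq_inv_mul]
  have step := taylor_step a b 2⁻¹ 2 h4 hc3 hc4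
  have e1 : (∫ s in a..b, ((2 : ℝ)⁻¹ * (b - s) ^ (2 + 1) / ((2 : ℕ) + 1 : ℝ)) • g4 s)
      = ∫ s in a..b, ((b - s) ^ 3 / 6) • g4 s := by
    apply intervalIntegral.integral_congr; intro s _
    norm_num; ring_nf
  have e2 : ((2 : ℝ)⁻¹ * (b - a) ^ (2 + 1) / ((2 : ℕ) + 1 : ℝ)) • g3 a
      = ((b - a) ^ 3 / 6) • g3 a := by norm_num; ring_nf
  rw [taylor3' h1 h2 h3 hc1 hc2 hc3 a b, e0, step, e1, e2]; abel

end taylor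

section bounds
variable {V : Type*} [NormedAddCommGroup V] [InnerProductSpace ℝ V] [CompleteSpace V]
variable {A : V →ₗ[ℝ] V}

lemma integral_le_of_bound {a b : ℝ} (hab : a ≤ b) {φ : ℝ → ℝ} (hφ : Continuous φ) {B : ℝ}
    (hB : ∀ s ∈ Set.Icc a b, φ s ≤ B) : (∫ s in a..b, φ s) ≤ (b - a) * B := by
  have h := intervalIntegral.integral_mono_on hab (hφ.intervalIntegrable a b)
    (_root_.intervalIntegrable_const (μ := MeasureTheory.volume) (c := B)) hB
  simpa [mul_comm] using h

lemma sn_integral_kernel_le (hsym : ∀ x y : V, ⟪A x, y⟫ = ⟪x, A y⟫)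
    (hpos : ∀ x : V, 0 ≤ ⟪A x, x⟫) (hA : Continuous fun v : V => A v)
    {a b : ℝ} (hab : a ≤ b) {k : ℝ → ℝ} (hk : Continuous k) {w : ℝ → V} (hw : Continuous w)
    {c : ℝ} (hkc : ∀ s ∈ Set.Icc a b, |k s| ≤ c) :
    opSemiNorm A (∫ s in a..b, k s • w s) ≤ c * ∫ s in a..b, opSemiNorm A (w s) := by
  have hc : 0 ≤ c := le_trans (abs_nonneg _) (hkc a (Set.left_mem_Icc.2 hab))
  calc opSemiNorm A (∫ s in a..b, k s • w s)
      ≤ ∫ s in a..b, opSemiNorm A (k s • w s) :=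
        sn_integral_le hsym hpos hA hab (hk.smul hw)
    _ ≤ ∫ s in a..b, c * opSemiNorm A (w s) := by
        apply intervalIntegral.integral_mono_on hab
        · exact ((sn_continuous hA (hk.smul hw)).intervalIntegrable a b)
        · exact ((continuous_const.mul (sn_continuous hA hw)).intervalIntegrable a b)
        · intro s hs
          rw [sn_smul]
          exact mul_le_mul_of_nonneg_right (hkc s hs) (sn_nonneg A (w s))
    _ = c * ∫ s in a..b, opSemiNorm A (w s) := intervalIntegral.integral_const_mul c _

/-- bound for the second difference in terms of the second derivative. -/
lemma sd_bound (hsym : ∀ x y : V, ⟪A x, y⟫ = ⟪x, A y⟫)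
    (hpos : ∀ x : V, 0 ≤ ⟪A x, x⟫) (hA : Continuous fun v : V => A v)
    {g g1 g2 : ℝ → V} (h1 : ∀ t, HasDerivAt g (g1 t) t) (h2 : ∀ t, HasDerivAt g1 (g2 t) t)
    (hc1 : Continuous g1) (hc2 : Continuous g2) (t τ : ℝ) (hτ : 0 ≤ τ) :
    opSemiNorm A (g (t + τ) - (2 : ℝ) • g t + g (t - τ))
      ≤ τ * ∫ s in (t - τ)..(t + τ), opSemiNorm A (g2 s) := by
  have hplus := taylor2' h1 h2 hc1 hc2 t (t + τ)
  have hminus := taylor2' h1 h2 hc1 hc2 t (t - τ)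
  have hexp : g (t + τ) - (2 : ℝ) • g t + g (t - τ)
      = (∫ s in t..(t + τ), (t + τ - s) • g2 s) + ∫ s in t..(t - τ), (t - τ - s) • g2 s := by
    rw [hplus, hminus, show t + τ - t = τ by ring, show t - τ - t = -τ by ring,
      neg_smul, two_smul]
    abel
  rw [hexp]
  have hflip : (∫ s in t..(t - τ), (t - τ - s) • g2 s)
      = -∫ s in (t - τ)..t, (t - τ - s) • g2 s := (intervalIntegral.integral_symm _ _)
  have b1 : opSemiNorm A (∫ s in t..(t + τ), (t + τ - s) • g2 s)
      ≤ τ * ∫ s in t..(t + τ), opSemiNorm A (g2 s) := by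
    apply sn_integral_kernel_le hsym hpos hA (by linarith) (by fun_prop) hc2
    intro s hs
    rw [abs_le]; constructor <;> [linarith [hs.2]; linarith [hs.1, hs.2]]
  have b2 : opSemiNorm A (∫ s in t..(t - τ), (t - τ - s) • g2 s)
      ≤ τ * ∫ s in (t - τ)..t, opSemiNorm A (g2 s) := by
    rw [hflip, sn_neg]
    apply sn_integral_kernel_le hsym hpos hA (by linarith) (by fun_prop) hc2
    intro s hs
    rw [abs_le]; constructor <;> [linarith [hs.1, hs.2]; linarith [hs.1]]
  have hsplit : (∫ s in (t - τ)..t, opSemiNorm A (g2 s))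
      + (∫ s in t..(t + τ), opSemiNorm A (g2 s))
      = ∫ s in (t - τ)..(t + τ), opSemiNorm A (g2 s) :=
    intervalIntegral.integral_add_adjacent_intervals
      ((sn_continuous hA hc2).intervalIntegrable _ _)
      ((sn_continuous hA hc2).intervalIntegrable _ _)
  calc opSemiNorm A ((∫ s in t..(t + τ), (t + τ - s) • g2 s)
        + ∫ s in t..(t - τ), (t - τ - s) • g2 s)
      ≤ opSemiNorm A (∫ s in t..(t + τ), (t + τ - s) • g2 s)
        + opSemiNorm A (∫ s in t..(t - τ), (t - τ - s) • g2 s) := sn_add_le hsym hpos _ _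
    _ ≤ τ * (∫ s in t..(t + τ), opSemiNorm A (g2 s))
        + τ * ∫ s in (t - τ)..t, opSemiNorm A (g2 s) := add_le_add b1 b2
    _ = τ * ∫ s in (t - τ)..(t + τ), opSemiNorm A (g2 s) := by rw [← hsplit]; ring

/-- bound for the second difference minus `τ² g''` in terms of the fourth derivative. -/
lemma sd4_bound (hsym : ∀ x y : V, ⟪A x, y⟫ = ⟪x, A y⟫)
    (hpos : ∀ x : V, 0 ≤ ⟪A x, x⟫) (hA : Continuous fun v : V => A v)
    {g g1 g2 g3 g4 : ℝ → V} (h1 : ∀ t, HasDerivAt g (g1 t) t)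
    (h2 : ∀ t, HasDerivAt g1 (g2 t) t) (h3 : ∀ t, HasDerivAt g2 (g3 t) t)
    (h4 : ∀ t, HasDerivAt g3 (g4 t) t)
    (hc1 : Continuous g1) (hc2 : Continuous g2) (hc3 : Continuous g3) (hc4 : Continuous g4)
    (t τ : ℝ) (hτ : 0 ≤ τ) :
    opSemiNorm A (g (t + τ) - (2 : ℝ) • g t + g (t - τ) - (τ ^ 2) • g2 t)
      ≤ (τ ^ 3 / 6) * ∫ s in (t - τ)..(t + τ), opSemiNorm A (g4 s) := by
  have hplus := taylor4' h1 h2 h3 h4 hc1 hc2 hc3 hc4 t (t + τ)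
  have hminus := taylor4' h1 h2 h3 h4 hc1 hc2 hc3 hc4 t (t - τ)
  have hexp : g (t + τ) - (2 : ℝ) • g t + g (t - τ) - (τ ^ 2) • g2 t
      = (∫ s in t..(t + τ), ((t + τ - s) ^ 3 / 6) • g4 s)
        + ∫ s in t..(t - τ), ((t - τ - s) ^ 3 / 6) • g4 s := by
    rw [hplus, hminus, show t + τ - t = τ by ring, show t - τ - t = -τ by ring]
    rw [show ((-τ) ^ 2 / 2 : ℝ) = τ ^ 2 / 2 by ring,
      show ((-τ) ^ 3 / 6 : ℝ) = -(τ ^ 3 / 6) by ring, neg_smul (τ : ℝ),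
      neg_smul (τ ^ 3 / 6 : ℝ), two_smul,
      show ((τ ^ 2 : ℝ) • g2 t : V) = (τ ^ 2 / 2) • g2 t + (τ ^ 2 / 2) • g2 t by
        rw [← add_smul]; norm_num]
    abel
  rw [hexp]
  have hflip : (∫ s in t..(t - τ), ((t - τ - s) ^ 3 / 6) • g4 s)
      = -∫ s in (t - τ)..t, ((t - τ - s) ^ 3 / 6) • g4 s := (intervalIntegral.integral_symm _ _)
  have hcube : ∀ x : ℝ, |x| ≤ τ → |x ^ 3 / 6| ≤ τ ^ 3 / 6 := by
    intro x hx
    have h1 : |x ^ 3 / 6| = |x| ^ 3 / 6 := by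
      rw [abs_div, abs_pow]; norm_num
    rw [h1]
    have h2 := pow_le_pow_left₀ (abs_nonneg x) hx 3
    linarith
  have b1 : opSemiNorm A (∫ s in t..(t + τ), ((t + τ - s) ^ 3 / 6) • g4 s)
      ≤ (τ ^ 3 / 6) * ∫ s in t..(t + τ), opSemiNorm A (g4 s) := by
    apply sn_integral_kernel_le hsym hpos hA (by linarith) (by fun_prop) hc4
    intro s hs
    apply hcube
    rw [abs_le]; constructor <;> [linarith [hs.2]; linarith [hs.1, hs.2]]
  have b2 : opSemiNorm A (∫ s in t..(t - τ), ((t - τ - s) ^ 3 / 6) • g4 s)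
      ≤ (τ ^ 3 / 6) * ∫ s in (t - τ)..t, opSemiNorm A (g4 s) := by
    rw [hflip, sn_neg]
    apply sn_integral_kernel_le hsym hpos hA (by linarith) (by fun_prop) hc4
    intro s hs
    apply hcube
    rw [abs_le]; constructor <;> [linarith [hs.1, hs.2]; linarith [hs.1]]
  have hsplit : (∫ s in (t - τ)..t, opSemiNorm A (g4 s))
      + (∫ s in t..(t + τ), opSemiNorm A (g4 s))
      = ∫ s in (t - τ)..(t + τ), opSemiNorm A (g4 s) :=
    intervalIntegral.integral_add_adjacent_intervals
      ((sn_continuous hA hc4).intervalIntegrable _ _)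
      ((sn_continuous hA hc4).intervalIntegrable _ _)
  calc opSemiNorm A ((∫ s in t..(t + τ), ((t + τ - s) ^ 3 / 6) • g4 s)
        + ∫ s in t..(t - τ), ((t - τ - s) ^ 3 / 6) • g4 s)
      ≤ _ + _ := sn_add_le hsym hpos _ _
    _ ≤ (τ ^ 3 / 6) * (∫ s in t..(t + τ), opSemiNorm A (g4 s))
        + (τ ^ 3 / 6) * ∫ s in (t - τ)..t, opSemiNorm A (g4 s) := add_le_add b1 b2
    _ = (τ ^ 3 / 6) * ∫ s in (t - τ)..(t + τ), opSemiNorm A (g4 s) := by rw [← hsplit]; ring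

/-- midpoint rule bound in terms of the third derivative. -/
lemma mid_bound (hsym : ∀ x y : V, ⟪A x, y⟫ = ⟪x, A y⟫)
    (hpos : ∀ x : V, 0 ≤ ⟪A x, x⟫) (hA : Continuous fun v : V => A v)
    {g g1 g2 g3 : ℝ → V} (h1 : ∀ t, HasDerivAt g (g1 t) t)
    (h2 : ∀ t, HasDerivAt g1 (g2 t) t) (h3 : ∀ t, HasDerivAt g2 (g3 t) t)
    (hc1 : Continuous g1) (hc2 : Continuous g2) (hc3 : Continuous g3)
    (t h : ℝ) (hh : 0 ≤ h) :
    opSemiNorm A (g (t + h) - g (t - h) - (2 * h) • g1 t)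
      ≤ (h ^ 2 / 2) * ∫ s in (t - h)..(t + h), opSemiNorm A (g3 s) := by
  have hplus := taylor3' h1 h2 h3 hc1 hc2 hc3 t (t + h)
  have hminus := taylor3' h1 h2 h3 hc1 hc2 hc3 t (t - h)
  have hexp : g (t + h) - g (t - h) - (2 * h) • g1 t
      = (∫ s in t..(t + h), ((t + h - s) ^ 2 / 2) • g3 s)
        - ∫ s in t..(t - h), ((t - h - s) ^ 2 / 2) • g3 s := by
    rw [hplus, hminus, show t + h - t = h by ring, show t - h - t = -h by ring]
    rw [show ((-h) ^ 2 / 2 : ℝ) = h ^ 2 / 2 by ring, neg_smul (h : ℝ),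
      show ((2 * h) • g1 t : V) = h • g1 t + h • g1 t by rw [← add_smul]; ring_nf]
    abel
  rw [hexp]
  have hflip : (∫ s in t..(t - h), ((t - h - s) ^ 2 / 2) • g3 s)
      = -∫ s in (t - h)..t, ((t - h - s) ^ 2 / 2) • g3 s := (intervalIntegral.integral_symm _ _)
  have hsq : ∀ x : ℝ, |x| ≤ h → |x ^ 2 / 2| ≤ h ^ 2 / 2 := by
    intro x hx
    have h1 : |x ^ 2 / 2| = |x| ^ 2 / 2 := by rw [abs_div, abs_pow]; norm_num
    rw [h1]
    have h2 := pow_le_pow_left₀ (abs_nonneg x) hx 2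
    linarith
  have b1 : opSemiNorm A (∫ s in t..(t + h), ((t + h - s) ^ 2 / 2) • g3 s)
      ≤ (h ^ 2 / 2) * ∫ s in t..(t + h), opSemiNorm A (g3 s) := by
    apply sn_integral_kernel_le hsym hpos hA (by linarith) (by fun_prop) hc3
    intro s hs
    apply hsq
    rw [abs_le]; constructor <;> [linarith [hs.2]; linarith [hs.1, hs.2]]
  have b2 : opSemiNorm A (∫ s in t..(t - h), ((t - h - s) ^ 2 / 2) • g3 s)
      ≤ (h ^ 2 / 2) * ∫ s in (t - h)..t, opSemiNorm A (g3 s) := by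
    rw [hflip, sn_neg]
    apply sn_integral_kernel_le hsym hpos hA (by linarith) (by fun_prop) hc3
    intro s hs
    apply hsq
    rw [abs_le]; constructor <;> [linarith [hs.1, hs.2]; linarith [hs.1]]
  have hsplit : (∫ s in (t - h)..t, opSemiNorm A (g3 s))
      + (∫ s in t..(t + h), opSemiNorm A (g3 s))
      = ∫ s in (t - h)..(t + h), opSemiNorm A (g3 s) :=
    intervalIntegral.integral_add_adjacent_intervals
      ((sn_continuous hA hc3).intervalIntegrable _ _)
      ((sn_continuous hA hc3).intervalIntegrable _ _)
  calc opSemiNorm A ((∫ s in t..(t + h), ((t + h - s) ^ 2 / 2) • g3 s)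
        - ∫ s in t..(t - h), ((t - h - s) ^ 2 / 2) • g3 s)
      ≤ _ + _ := sn_sub_le hsym hpos _ _
    _ ≤ (h ^ 2 / 2) * (∫ s in t..(t + h), opSemiNorm A (g3 s))
        + (h ^ 2 / 2) * ∫ s in (t - h)..t, opSemiNorm A (g3 s) := add_le_add b1 b2
    _ = (h ^ 2 / 2) * ∫ s in (t - h)..(t + h), opSemiNorm A (g3 s) := by rw [← hsplit]; ring

lemma taylor1_bound (hsym : ∀ x y : V, ⟪A x, y⟫ = ⟪x, A y⟫)
    (hpos : ∀ x : V, 0 ≤ ⟪A x, x⟫) (hA : Continuous fun v : V => A v)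
    {g g1 : ℝ → V} (h1 : ∀ t, HasDerivAt g (g1 t) t) (hc1 : Continuous g1)
    (a b : ℝ) (hab : a ≤ b) {B : ℝ} (hB : ∀ s ∈ Set.Icc a b, opSemiNorm A (g1 s) ≤ B) :
    opSemiNorm A (g b - g a) ≤ (b - a) * B := by
  have h := taylor1' h1 hc1 a b
  have : g b - g a = ∫ s in a..b, g1 s := by rw [h]; abel
  rw [this]
  calc opSemiNorm A (∫ s in a..b, g1 s) ≤ ∫ s in a..b, opSemiNorm A (g1 s) :=
        sn_integral_le hsym hpos hA hab hc1
    _ ≤ (b - a) * B := integral_le_of_bound hab (sn_continuous hA hc1) hB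

end bounds
set_option maxHeartbeats 8000000 in
/-- Theorem 5.8 of the paper: the `M`-norm error bound for the
discrete time derivative of the fully discrete Galerkin method in the multiscale
space `S`, with the localized Ritz projection abstracted into a linear map `R`;
the constant `C` depends only on `C_R`. -/
theorem stmt14 (C_R : ℝ) (hCR : 0 < C_R) :
    ∃ C : ℝ, 0 < C ∧
      ∀ (V : Type) [NormedAddCommGroup V] [InnerProductSpace ℝ V]
        [FiniteDimensional ℝ V]
        (M K : V →ₗ[ℝ] V),
        (∀ x y : V, ⟪M x, y⟫ = ⟪x, M y⟫) →
        (∀ x : V, x ≠ 0 → 0 < ⟪M x, x⟫) →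
        (∀ x y : V, ⟪K x, y⟫ = ⟪x, K y⟫) →
        (∀ x : V, 0 ≤ ⟪K x, x⟫) →
        ∀ (S : Submodule ℝ V) (R : V →ₗ[ℝ] V),
        (∀ v : V, R v ∈ S) →
        (∀ v : V, ∀ s ∈ S, ⟪K (R v - v), s⟫ = 0) →
        ∀ (T : ℝ) (N : ℕ), 0 < T → 2 ≤ N →
        ∀ (H : ℝ), 0 < H →
        ∀ f u : ℝ → V, ContDiff ℝ 2 f → ContDiff ℝ 4 u →
        (∀ t ∈ Set.Icc (0 : ℝ) T,
          M (iteratedDeriv 2 u t) + K (u t) = M (f t)) →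
        (∀ t ∈ Set.Icc (0 : ℝ) T,
          opSemiNorm K (R (u t) - u t) ≤
            C_R * H * (opSemiNorm M (f t - iteratedDeriv 2 u t) + opSemiNorm K (u t))) →
        (∀ t ∈ Set.Icc (0 : ℝ) T,
          opSemiNorm M (R (iteratedDeriv 2 u t) - iteratedDeriv 2 u t) ≤
            C_R * H * opSemiNorm K (iteratedDeriv 2 u t)) →
        (∀ t ∈ Set.Icc (0 : ℝ) T,
          opSemiNorm M (R (iteratedDeriv 1 u t) - iteratedDeriv 1 u t) ≤
            C_R * H * opSemiNorm K (iteratedDeriv 1 u t)) →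
        ∀ U : ℕ → V, (∀ n, U n ∈ S) →
        (∀ n : ℕ, 1 ≤ n → n ≤ N - 1 → ∀ v ∈ S,
          ⟪M (((T / N) ^ 2)⁻¹ • (U (n + 1) - (2 : ℝ) • U n + U (n - 1))) +
              K ((4 : ℝ)⁻¹ • (U (n + 1) + (2 : ℝ) • U n + U (n - 1))) -
              M (f (n * (T / N))), v⟫ = 0) →
        ∀ n : ℕ, 1 ≤ n → n ≤ N - 1 →
          opSemiNorm M
              ((T / N)⁻¹ • (U (n + 1) - U n) -
                iteratedDeriv 1 u (n * (T / N) + (T / N) / 2)) ≤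
            C * (opSemiNorm M
                  ((T / N)⁻¹ • (U 1 - U 0) - R ((T / N)⁻¹ • (u (T / N) - u 0))) +
                opSemiNorm K
                  ((2 : ℝ)⁻¹ • (U 1 + U 0) - R ((2 : ℝ)⁻¹ • (u (T / N) + u 0))) +
                (T / N) ^ 2 *
                  ((∫ s in (0 : ℝ)..T, opSemiNorm M (iteratedDeriv 4 u s)) +
                    (∫ s in (0 : ℝ)..T, opSemiNorm M (iteratedDeriv 2 f s)) +
                    H * (∫ s in (0 : ℝ)..T, opSemiNorm K (iteratedDeriv 2 u s)) +
                    ⨆ t : Set.Icc (0 : ℝ) T, opSemiNorm M (iteratedDeriv 3 u t)) +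
                H * ((T + T / N) *
                    (⨆ t : Set.Icc (0 : ℝ) T, opSemiNorm K (iteratedDeriv 2 u t)) +
                  ⨆ t : Set.Icc (0 : ℝ) T, opSemiNorm K (iteratedDeriv 1 u t))) := by
  refine ⟨2 * C_R + 2, by linarith, ?_⟩
  intro V _ _ _ M K hMsym hMpos hKsym hKpos S R hRS hGal T N hT hN H hH f u hf hu
    hPDE hI hII hIII U hUS hScheme n hn1 hnN
  -- basic numerics
  set τ := T / N with hτdef
  have hN2 : (2 : ℝ) ≤ (N : ℝ) := by exact_mod_cast hN
  have hNpos : (0 : ℝ) < (N : ℝ) := by linarith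
  have hτ : 0 < τ := div_pos hT hNpos
  have hNτ : (N : ℝ) * τ = T := by rw [hτdef]; field_simp
  have hMpos' : ∀ x : V, 0 ≤ ⟪M x, x⟫ := by
    intro x
    by_cases hx : x = 0
    · simp [hx]
    · exact (hMpos x hx).le
  have hMc : Continuous fun v : V => M v := M.continuous_of_finiteDimensional
  have hKc : Continuous fun v : V => K v := K.continuous_of_finiteDimensional
  have hMswap : ∀ x y : V, ⟪M x, y⟫ = ⟪M y, x⟫ := fun x y => by
    rw [hMsym, real_inner_comm]
  have hKswap : ∀ x y : V, ⟪K x, y⟫ = ⟪K y, x⟫ := fun x y => by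
    rw [hKsym, real_inner_comm]
  -- derivatives
  have hD : ∀ m : ℕ, m < 4 → ∀ t, HasDerivAt (iteratedDeriv m u) (iteratedDeriv (m+1) u t) t := by
    intro m hm t
    rw [iteratedDeriv_succ]
    exact ((hu.differentiable_iteratedDeriv m (by exact_mod_cast hm)).differentiableAt).hasDerivAt
  have hC : ∀ m : ℕ, m ≤ 4 → Continuous (iteratedDeriv m u) := fun m hm =>
    hu.continuous_iteratedDeriv m (by exact_mod_cast hm)
  have hfD : ∀ m : ℕ, m < 2 → ∀ t, HasDerivAt (iteratedDeriv m f) (iteratedDeriv (m+1) f t) t := by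
    intro m hm t
    rw [iteratedDeriv_succ]
    exact ((hf.differentiable_iteratedDeriv m (by exact_mod_cast hm)).differentiableAt).hasDerivAt
  have hfC : ∀ m : ℕ, m ≤ 2 → Continuous (iteratedDeriv m f) := fun m hm =>
    hf.continuous_iteratedDeriv m (by exact_mod_cast hm)
  have hD0 : ∀ t, HasDerivAt u (iteratedDeriv 1 u t) t := by
    intro t; have h := hD 0 (by norm_num) t; rwa [iteratedDeriv_zero] at h
  have hC0 : Continuous u := by have h := hC 0 (by norm_num); rwa [iteratedDeriv_zero] at h
  have hfD0 : ∀ t, HasDerivAt f (iteratedDeriv 1 f t) t := by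
    intro t; have h := hfD 0 (by norm_num) t; rwa [iteratedDeriv_zero] at h
  have hfC0 : Continuous f := by have h := hfC 0 (by norm_num); rwa [iteratedDeriv_zero] at h
  -- Ritz error functions
  set P : ℕ → ℝ → V := fun m t => R (iteratedDeriv m u t) - iteratedDeriv m u t with hPdef
  have hPd : ∀ m : ℕ, m < 4 → ∀ t, HasDerivAt (P m) (P (m+1) t) t := by
    intro m hm t
    have h1 : HasDerivAt (fun s => R (iteratedDeriv m u s)) (R (iteratedDeriv (m+1) u t)) t := by
      have := (LinearMap.toContinuousLinearMap R).hasFDerivAt.comp_hasDerivAt t (hD m hm t)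
      simpa [Function.comp_def] using this
    exact h1.sub (hD m hm t)
  have hPc : ∀ m : ℕ, m ≤ 4 → Continuous (P m) := fun m hm =>
    ((LinearMap.toContinuousLinearMap R).continuous.comp (hC m hm)).sub (hC m hm)
  -- time grid membership
  have htmem : ∀ m : ℕ, m ≤ N → ((m : ℝ) * τ) ∈ Set.Icc (0 : ℝ) T := by
    intro m hm
    constructor
    · positivity
    · rw [← hNτ]
      have : (m : ℝ) ≤ (N : ℝ) := by exact_mod_cast hm
      nlinarith
  -- sup bounds
  set B1 := ⨆ t : Set.Icc (0 : ℝ) T, opSemiNorm K (iteratedDeriv 1 u ↑t) with hB1def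
  set B2 := ⨆ t : Set.Icc (0 : ℝ) T, opSemiNorm K (iteratedDeriv 2 u ↑t) with hB2def
  set B3 := ⨆ t : Set.Icc (0 : ℝ) T, opSemiNorm M (iteratedDeriv 3 u ↑t) with hB3def
  have hsupb : ∀ (A : V →ₗ[ℝ] V), (Continuous fun v : V => A v) → ∀ (g : ℝ → V), Continuous g →
      ∀ s ∈ Set.Icc (0 : ℝ) T, opSemiNorm A (g s) ≤ ⨆ t : Set.Icc (0 : ℝ) T, opSemiNorm A (g ↑t) := by
    intro A hA g hg s hs
    have hbdd : BddAbove (Set.range fun t : Set.Icc (0 : ℝ) T => opSemiNorm A (g ↑t)) := by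
      have himg := (isCompact_Icc (a := (0 : ℝ)) (b := T)).bddAbove_image
        (sn_continuous hA hg).continuousOn
      rwa [Set.image_eq_range] at himg
    exact le_ciSup hbdd (⟨s, hs⟩ : Set.Icc (0 : ℝ) T)
  have hB1b : ∀ s ∈ Set.Icc (0 : ℝ) T, opSemiNorm K (iteratedDeriv 1 u s) ≤ B1 :=
    hsupb K hKc _ (hC 1 (by norm_num))
  have hB2b : ∀ s ∈ Set.Icc (0 : ℝ) T, opSemiNorm K (iteratedDeriv 2 u s) ≤ B2 :=
    hsupb K hKc _ (hC 2 (by norm_num))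
  have hB3b : ∀ s ∈ Set.Icc (0 : ℝ) T, opSemiNorm M (iteratedDeriv 3 u s) ≤ B3 :=
    hsupb M hMc _ (hC 3 (by norm_num))
  have hB1nn : 0 ≤ B1 := le_trans (sn_nonneg _ _) (hB1b 0 (Set.left_mem_Icc.2 hT.le))
  have hB2nn : 0 ≤ B2 := le_trans (sn_nonneg _ _) (hB2b 0 (Set.left_mem_Icc.2 hT.le))
  have hB3nn : 0 ≤ B3 := le_trans (sn_nonneg _ _) (hB3b 0 (Set.left_mem_Icc.2 hT.le))
  set I4 := ∫ s in (0 : ℝ)..T, opSemiNorm M (iteratedDeriv 4 u s) with hI4def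
  set If := ∫ s in (0 : ℝ)..T, opSemiNorm M (iteratedDeriv 2 f s) with hIfdef
  set I2K := ∫ s in (0 : ℝ)..T, opSemiNorm K (iteratedDeriv 2 u s) with hI2Kdef
  have hI4nn : 0 ≤ I4 := intervalIntegral.integral_nonneg hT.le (fun s _ => sn_nonneg _ _)
  have hIfnn : 0 ≤ If := intervalIntegral.integral_nonneg hT.le (fun s _ => sn_nonneg _ _)
  have hI2Knn : 0 ≤ I2K := intervalIntegral.integral_nonneg hT.le (fun s _ => sn_nonneg _ _)
  set X1 := opSemiNorm M (τ⁻¹ • (U 1 - U 0) - R (τ⁻¹ • (u τ - u 0))) with hX1def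
  set X2 := opSemiNorm K ((2 : ℝ)⁻¹ • (U 1 + U 0) - R ((2 : ℝ)⁻¹ • (u τ + u 0))) with hX2def
  have hX1nn : 0 ≤ X1 := sn_nonneg _ _
  have hX2nn : 0 ≤ X2 := sn_nonneg _ _
  -- discrete quantities
  set W : ℕ → V := fun m => R (u ((m : ℝ) * τ)) with hWdef
  set e : ℕ → V := fun m => U m - W m with hedef
  have heS : ∀ m, e m ∈ S := fun m => Submodule.sub_mem S (hUS m) (hRS _)
  have hUe : ∀ m, U m = e m + W m := fun m => by simp only [hedef]; module
  set E : ℕ → ℝ := fun m => (τ ^ 2)⁻¹ * ⟪M (e (m+1) - e m), e (m+1) - e m⟫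
      + (4 : ℝ)⁻¹ * ⟪K (e (m+1) + e m), e (m+1) + e m⟫ with hEdef
  have hEnn : ∀ m, 0 ≤ E m := fun m =>
    add_nonneg (mul_nonneg (by positivity) (hMpos' _)) (mul_nonneg (by norm_num) (hKpos _))
  have hEM : ∀ m, opSemiNorm M (e (m+1) - e m) ≤ τ * Real.sqrt (E m) := by
    intro m
    have h1 : (opSemiNorm M (e (m+1) - e m)) ^ 2 ≤ τ ^ 2 * E m := by
      rw [sn_sq hMpos', hEdef]
      have h2 := mul_nonneg (by norm_num : (0:ℝ) ≤ (4:ℝ)⁻¹) (hKpos (e (m+1) + e m))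
      have h3 : (τ ^ 2) * ((τ ^ 2)⁻¹ * ⟪M (e (m+1) - e m), e (m+1) - e m⟫)
          = ⟪M (e (m+1) - e m), e (m+1) - e m⟫ := by
        field_simp
      nlinarith [sq_nonneg τ, hτ]
    have h4 : opSemiNorm M (e (m+1) - e m) = Real.sqrt ((opSemiNorm M (e (m+1) - e m)) ^ 2) :=
      (Real.sqrt_sq (sn_nonneg _ _)).symm
    rw [h4]
    calc Real.sqrt ((opSemiNorm M (e (m+1) - e m)) ^ 2) ≤ Real.sqrt (τ ^ 2 * E m) :=
          Real.sqrt_le_sqrt h1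
      _ = τ * Real.sqrt (E m) := by
          rw [Real.sqrt_mul (sq_nonneg τ), Real.sqrt_sq hτ.le]
  -- residual
  set G : ℕ → V := fun m => (τ ^ 2)⁻¹ • (W (m+1) - (2 : ℝ) • W m + W (m-1))
      + (4 : ℝ)⁻¹ • ((f ((↑(m+1) : ℝ) * τ) - iteratedDeriv 2 u ((↑(m+1) : ℝ) * τ))
        + (2 : ℝ) • (f ((m : ℝ) * τ) - iteratedDeriv 2 u ((m : ℝ) * τ))
        + (f ((↑(m-1) : ℝ) * τ) - iteratedDeriv 2 u ((↑(m-1) : ℝ) * τ)))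
      - f ((m : ℝ) * τ) with hGdef
  have hres : ∀ m : ℕ, 1 ≤ m → m ≤ N - 1 → ∀ v ∈ S,
      ⟪M ((τ ^ 2)⁻¹ • (e (m+1) - (2 : ℝ) • e m + e (m-1)))
        + K ((4 : ℝ)⁻¹ • (e (m+1) + (2 : ℝ) • e m + e (m-1))), v⟫ = -⟪M (G m), v⟫ := by
    intro m hm1 hmN v hv
    have hsch := hScheme m hm1 hmN v hv
    have hmN' : m + 1 ≤ N := by omega
    have hKW : ⟪K ((4 : ℝ)⁻¹ • (W (m+1) + (2 : ℝ) • W m + W (m-1))), v⟫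
        = ⟪K ((4 : ℝ)⁻¹ • (u ((↑(m+1) : ℝ) * τ) + (2 : ℝ) • u ((m : ℝ) * τ)
          + u ((↑(m-1) : ℝ) * τ))), v⟫ := by
      have hw := hGal ((4 : ℝ)⁻¹ • (u ((↑(m+1) : ℝ) * τ) + (2 : ℝ) • u ((m : ℝ) * τ)
          + u ((↑(m-1) : ℝ) * τ))) v hv
      have hRw : R ((4 : ℝ)⁻¹ • (u ((↑(m+1) : ℝ) * τ) + (2 : ℝ) • u ((m : ℝ) * τ)
          + u ((↑(m-1) : ℝ) * τ)))
          = (4 : ℝ)⁻¹ • (W (m+1) + (2 : ℝ) • W m + W (m-1)) := by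
        simp only [hWdef, map_add, LinearMap.map_smul]
      rw [hRw, map_sub, inner_sub_left] at hw
      linarith
    have hKu : ∀ j : ℕ, j ≤ N → K (u ((j : ℝ) * τ))
        = M (f ((j : ℝ) * τ) - iteratedDeriv 2 u ((j : ℝ) * τ)) := by
      intro j hj
      have h := hPDE _ (htmem j hj)
      rw [map_sub]
      exact eq_sub_of_add_eq' h
    have hKuc : K ((4 : ℝ)⁻¹ • (u ((↑(m+1) : ℝ) * τ) + (2 : ℝ) • u ((m : ℝ) * τ)
          + u ((↑(m-1) : ℝ) * τ)))
        = M ((4 : ℝ)⁻¹ • ((f ((↑(m+1) : ℝ) * τ) - iteratedDeriv 2 u ((↑(m+1) : ℝ) * τ))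
          + (2 : ℝ) • (f ((m : ℝ) * τ) - iteratedDeriv 2 u ((m : ℝ) * τ))
          + (f ((↑(m-1) : ℝ) * τ) - iteratedDeriv 2 u ((↑(m-1) : ℝ) * τ)))) := by
      rw [LinearMap.map_smul, LinearMap.map_smul, map_add, map_add, LinearMap.map_smul,
        map_add, map_add, LinearMap.map_smul,
        hKu (m+1) hmN', hKu m (by omega), hKu (m-1) (by omega)]
    -- rewrite the scheme
    have hvec1 : (τ ^ 2)⁻¹ • (U (m+1) - (2 : ℝ) • U m + U (m-1))
        = (τ ^ 2)⁻¹ • (e (m+1) - (2 : ℝ) • e m + e (m-1))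
          + (τ ^ 2)⁻¹ • (W (m+1) - (2 : ℝ) • W m + W (m-1)) := by
      rw [hUe (m+1), hUe m, hUe (m-1)]; module
    have hvec2 : (4 : ℝ)⁻¹ • (U (m+1) + (2 : ℝ) • U m + U (m-1))
        = (4 : ℝ)⁻¹ • (e (m+1) + (2 : ℝ) • e m + e (m-1))
          + (4 : ℝ)⁻¹ • (W (m+1) + (2 : ℝ) • W m + W (m-1)) := by
      rw [hUe (m+1), hUe m, hUe (m-1)]; module
    rw [hvec1, hvec2, map_add M, map_add K] at hsch
    have hGexp : ⟪M (G m), v⟫ = ⟪M ((τ ^ 2)⁻¹ • (W (m+1) - (2 : ℝ) • W m + W (m-1))), v⟫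
        + ⟪M ((4 : ℝ)⁻¹ • ((f ((↑(m+1) : ℝ) * τ) - iteratedDeriv 2 u ((↑(m+1) : ℝ) * τ))
          + (2 : ℝ) • (f ((m : ℝ) * τ) - iteratedDeriv 2 u ((m : ℝ) * τ))
          + (f ((↑(m-1) : ℝ) * τ) - iteratedDeriv 2 u ((↑(m-1) : ℝ) * τ)))), v⟫
        - ⟪M (f ((m : ℝ) * τ)), v⟫ := by
      rw [hGdef]
      simp only [map_add, map_sub, inner_add_left, inner_sub_left]
    rw [inner_sub_left, inner_add_left, inner_add_left] at hsch
    rw [inner_add_left, hKW, hKuc] at hsch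
    rw [inner_add_left]
    rw [hGexp]
    linarith
  -- initial energy
  have hX1e : X1 = opSemiNorm M (τ⁻¹ • (e 1 - e 0)) := by
    rw [hX1def]; congr 1
    simp only [hedef, hWdef]
    rw [show ((1:ℕ):ℝ) * τ = τ by norm_num, show ((0:ℕ):ℝ) * τ = (0:ℝ) by norm_num,
      LinearMap.map_smul, map_sub]
    module
  have hX2e : X2 = opSemiNorm K ((2 : ℝ)⁻¹ • (e 1 + e 0)) := by
    rw [hX2def]; congr 1
    simp only [hedef, hWdef]
    rw [show ((1:ℕ):ℝ) * τ = τ by norm_num, show ((0:ℕ):ℝ) * τ = (0:ℝ) by norm_num,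
      LinearMap.map_smul, map_add]
    module
  have hE0 : Real.sqrt (E 0) ≤ X1 + X2 := by
    have h1 : E 0 = X1 ^ 2 + X2 ^ 2 := by
      rw [hX1e, hX2e, sn_smul, sn_smul, mul_pow, mul_pow, sn_sq hMpos', sn_sq hKpos,
        abs_of_pos (inv_pos.2 hτ), show |((2:ℝ)⁻¹)| = (2:ℝ)⁻¹ by norm_num, hEdef]
      rw [show (τ⁻¹) ^ 2 = (τ ^ 2)⁻¹ by rw [inv_pow], show ((2:ℝ)⁻¹) ^ 2 = (4:ℝ)⁻¹ by norm_num]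
    have h2 : Real.sqrt (E 0) ≤ Real.sqrt ((X1 + X2) ^ 2) :=
      Real.sqrt_le_sqrt (by rw [h1]; nlinarith)
    rwa [Real.sqrt_sq (by positivity)] at h2
  -- energy step
  have hstep : ∀ p : ℕ, p + 1 ≤ N - 1 →
      Real.sqrt (E (p+1)) ≤ Real.sqrt (E p) + τ * opSemiNorm M (G (p+1)) := by
    intro p hp
    have hvS : e (p+2) - e p ∈ S := Submodule.sub_mem S (heS _) (heS _)
    have h := hres (p+1) (by omega) hp _ hvS
    rw [show p + 1 - 1 = p from rfl, show p + 1 + 1 = p + 2 from rfl] at h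
    have hiden : ⟪M ((τ ^ 2)⁻¹ • (e (p+2) - (2 : ℝ) • e (p+1) + e p))
        + K ((4 : ℝ)⁻¹ • (e (p+2) + (2 : ℝ) • e (p+1) + e p)), e (p+2) - e p⟫
        = E (p+1) - E p := by
      simp only [hEdef, show p + 1 + 1 = p + 2 from rfl, map_add, map_sub,
        LinearMap.map_smul, inner_add_left, inner_sub_left, inner_sub_right,
        inner_add_right, real_inner_smul_left, real_inner_smul_right, smul_eq_mul]
      linear_combination (τ ^ 2)⁻¹ * hMswap (e p) (e (p+2))
        + (τ ^ 2)⁻¹ * hMswap (e (p+2)) (e (p+1)) + (τ ^ 2)⁻¹ * hMswap (e (p+1)) (e p)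
        + (4 : ℝ)⁻¹ * hKswap (e p) (e (p+2)) + (4 : ℝ)⁻¹ * hKswap (e (p+1)) (e (p+2))
        + (4 : ℝ)⁻¹ * hKswap (e p) (e (p+1))
    rw [hiden] at h
    -- h : E (p+1) - E p = -⟪M (G (p+1)), e (p+2) - e p⟫
    have hGnn : 0 ≤ opSemiNorm M (G (p+1)) := sn_nonneg _ _
    have hcs : -⟪M (G (p+1)), e (p+2) - e p⟫
        ≤ opSemiNorm M (G (p+1)) * opSemiNorm M (e (p+2) - e p) := by
      have h1 := sn_cs hMsym hMpos' (G (p+1)) (-(e (p+2) - e p))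
      rw [inner_neg_right, sn_neg] at h1
      linarith
    have htri : opSemiNorm M (e (p+2) - e p)
        ≤ opSemiNorm M (e (p+2) - e (p+1)) + opSemiNorm M (e (p+1) - e p) := by
      have h1 : e (p+2) - e p = (e (p+2) - e (p+1)) + (e (p+1) - e p) := by abel
      rw [h1]
      exact sn_add_le hMsym hMpos' _ _
    have hb1 : opSemiNorm M (e (p+2) - e (p+1)) ≤ τ * Real.sqrt (E (p+1)) := hEM (p+1)
    have hb2 : opSemiNorm M (e (p+1) - e p) ≤ τ * Real.sqrt (E p) := hEM p
    set x := Real.sqrt (E (p+1)) with hxdef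
    set y := Real.sqrt (E p) with hydef
    have hxnn : 0 ≤ x := Real.sqrt_nonneg _
    have hynn : 0 ≤ y := Real.sqrt_nonneg _
    have hx2 : x ^ 2 = E (p+1) := Real.sq_sqrt (hEnn _)
    have hy2 : y ^ 2 = E p := Real.sq_sqrt (hEnn _)
    have hkey : x ^ 2 - y ^ 2 ≤ (τ * opSemiNorm M (G (p+1))) * (x + y) := by
      have h3 : E (p+1) - E p ≤ opSemiNorm M (G (p+1)) * (τ * x + τ * y) := by
        calc E (p+1) - E p = -⟪M (G (p+1)), e (p+2) - e p⟫ := h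
          _ ≤ opSemiNorm M (G (p+1)) * opSemiNorm M (e (p+2) - e p) := hcs
          _ ≤ opSemiNorm M (G (p+1)) * (τ * x + τ * y) := by
              apply mul_le_mul_of_nonneg_left _ hGnn
              linarith
      rw [hx2, hy2]
      nlinarith [h3]
    by_cases hxy : x ≤ y
    · have : 0 ≤ τ * opSemiNorm M (G (p+1)) := mul_nonneg hτ.le hGnn
      linarith
    · push_neg at hxy
      have hsum : 0 < x + y := by linarith
      nlinarith [hkey, hsum]
  -- energy induction
  have hSE : ∀ p : ℕ, p ≤ N - 1 →
      Real.sqrt (E p) ≤ Real.sqrt (E 0)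
        + ∑ j ∈ Finset.range p, (τ * opSemiNorm M (G (j+1))) := by
    intro p
    induction p with
    | zero => intro _; simp
    | succ q ih =>
      intro hq
      have h1 := hstep q hq
      have h2 := ih (by omega)
      rw [Finset.sum_range_succ]
      linarith
  -- local integrals
  set J : ℕ → ℝ := fun m => ∫ s in ((m:ℝ)*τ - τ)..((m:ℝ)*τ + τ),
      opSemiNorm M (iteratedDeriv 4 u s) with hJdef
  set Jf : ℕ → ℝ := fun m => ∫ s in ((m:ℝ)*τ - τ)..((m:ℝ)*τ + τ),
      opSemiNorm M (iteratedDeriv 2 f s) with hJfdef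
  -- residual bound
  have hGb : ∀ m : ℕ, 1 ≤ m → m ≤ N - 1 →
      opSemiNorm M (G m) ≤ (5*τ/12) * J m + (τ/4) * Jf m + 2*C_R*H*B2 := by
    intro m hm1 hmN
    set t := (m:ℝ) * τ with htdef
    have hcast1 : ((↑(m+1) : ℝ)) * τ = t + τ := by rw [htdef]; push_cast; ring
    have hcast0 : ((↑(m-1) : ℝ)) * τ = t - τ := by
      rw [htdef, Nat.cast_sub hm1]; push_cast; ring
    have h1m : (1:ℝ) ≤ (m:ℝ) := by exact_mod_cast hm1
    have h2m : (m:ℝ) + 1 ≤ (N:ℝ) := by exact_mod_cast (show m + 1 ≤ N by omega)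
    have hsub : Set.Icc (t - τ) (t + τ) ⊆ Set.Icc (0:ℝ) T := by
      intro s hs
      constructor
      · nlinarith [hs.1, hτ]
      · nlinarith [hs.2, hτ, hNτ]
    have hJm : J m = ∫ s in (t - τ)..(t + τ), opSemiNorm M (iteratedDeriv 4 u s) := by
      simp only [hJdef]; rfl
    have hJfm : Jf m = ∫ s in (t - τ)..(t + τ), opSemiNorm M (iteratedDeriv 2 f s) := by
      simp only [hJfdef]; rfl
    have hdecomp : G m
        = ((τ ^ 2)⁻¹ • (u (t+τ) - (2:ℝ) • u t + u (t-τ) - (τ^2) • iteratedDeriv 2 u t))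
          + ((τ ^ 2)⁻¹ • (P 0 (t+τ) - (2:ℝ) • P 0 t + P 0 (t-τ)))
          + ((4:ℝ)⁻¹ • (f (t+τ) - (2:ℝ) • f t + f (t-τ)))
          - ((4:ℝ)⁻¹ • (iteratedDeriv 2 u (t+τ) - (2:ℝ) • iteratedDeriv 2 u t
              + iteratedDeriv 2 u (t-τ))) := by
      simp only [hGdef, hWdef, hPdef, hcast1, hcast0, iteratedDeriv_zero, ← htdef]
      match_scalars <;> (field_simp; try ring)
    have hτ2pos : (0:ℝ) < (τ^2)⁻¹ := by positivity
    have hAb : opSemiNorm M ((τ ^ 2)⁻¹ • (u (t+τ) - (2:ℝ) • u t + u (t-τ)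
        - (τ^2) • iteratedDeriv 2 u t)) ≤ (τ/6) * J m := by
      rw [sn_smul, abs_of_pos hτ2pos]
      have hb := sd4_bound hMsym hMpos' hMc hD0 (hD 1 (by norm_num)) (hD 2 (by norm_num))
        (hD 3 (by norm_num)) (hC 1 (by norm_num)) (hC 2 (by norm_num)) (hC 3 (by norm_num))
        (hC 4 (by norm_num)) t τ hτ.le
      norm_num at hb
      calc (τ^2)⁻¹ * opSemiNorm M (u (t+τ) - (2:ℝ) • u t + u (t-τ)
            - (τ^2) • iteratedDeriv 2 u t)
          ≤ (τ^2)⁻¹ * ((τ^3/6) * ∫ s in (t-τ)..(t+τ), opSemiNorm M (iteratedDeriv 4 u s)) :=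
            mul_le_mul_of_nonneg_left hb hτ2pos.le
        _ = (τ/6) * J m := by rw [hJm]; field_simp
    have hBb : opSemiNorm M ((τ ^ 2)⁻¹ • (P 0 (t+τ) - (2:ℝ) • P 0 t + P 0 (t-τ)))
        ≤ 2*C_R*H*B2 := by
      rw [sn_smul, abs_of_pos hτ2pos]
      have hb := sd_bound hMsym hMpos' hMc (hPd 0 (by norm_num)) (hPd 1 (by norm_num))
        (hPc 1 (by norm_num)) (hPc 2 (by norm_num)) t τ hτ.le
      norm_num at hb
      have hint : (∫ s in (t-τ)..(t+τ), opSemiNorm M (P 2 s)) ≤ (2*τ) * (C_R*H*B2) := by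
        have hptw : ∀ s ∈ Set.Icc (t-τ) (t+τ), opSemiNorm M (P 2 s) ≤ C_R*H*B2 := by
          intro s hs
          have hsT := hsub hs
          have h1 : opSemiNorm M (P 2 s)
              ≤ C_R * H * opSemiNorm K (iteratedDeriv 2 u s) := by
            simp only [hPdef]
            exact hII s hsT
          calc opSemiNorm M (P 2 s) ≤ C_R * H * opSemiNorm K (iteratedDeriv 2 u s) := h1
            _ ≤ C_R * H * B2 := by
                apply mul_le_mul_of_nonneg_left (hB2b s hsT) (by positivity)
        have := integral_le_of_bound (a := t-τ) (b := t+τ) (by linarith)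
          (sn_continuous hMc (hPc 2 (by norm_num))) hptw
        calc (∫ s in (t-τ)..(t+τ), opSemiNorm M (P 2 s))
            ≤ ((t+τ) - (t-τ)) * (C_R*H*B2) := this
          _ = (2*τ) * (C_R*H*B2) := by ring
      calc (τ^2)⁻¹ * opSemiNorm M (P 0 (t+τ) - (2:ℝ) • P 0 t + P 0 (t-τ))
          ≤ (τ^2)⁻¹ * (τ * ∫ s in (t-τ)..(t+τ), opSemiNorm M (P 2 s)) :=
            mul_le_mul_of_nonneg_left hb hτ2pos.le
        _ ≤ (τ^2)⁻¹ * (τ * ((2*τ) * (C_R*H*B2))) := by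
            apply mul_le_mul_of_nonneg_left _ hτ2pos.le
            exact mul_le_mul_of_nonneg_left hint hτ.le
        _ = 2*C_R*H*B2 := by field_simp
    have hCb : opSemiNorm M ((4:ℝ)⁻¹ • (f (t+τ) - (2:ℝ) • f t + f (t-τ))) ≤ (τ/4) * Jf m := by
      rw [sn_smul, show |((4:ℝ)⁻¹)| = (4:ℝ)⁻¹ by norm_num]
      have hb := sd_bound hMsym hMpos' hMc hfD0 (hfD 1 (by norm_num))
        (hfC 1 (by norm_num)) (hfC 2 (by norm_num)) t τ hτ.le
      norm_num at hb
      calc (4:ℝ)⁻¹ * opSemiNorm M (f (t+τ) - (2:ℝ) • f t + f (t-τ))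
          ≤ (4:ℝ)⁻¹ * (τ * ∫ s in (t-τ)..(t+τ), opSemiNorm M (iteratedDeriv 2 f s)) :=
            mul_le_mul_of_nonneg_left hb (by norm_num)
        _ = (τ/4) * Jf m := by rw [hJfm]; ring
    have hDb : opSemiNorm M ((4:ℝ)⁻¹ • (iteratedDeriv 2 u (t+τ)
        - (2:ℝ) • iteratedDeriv 2 u t + iteratedDeriv 2 u (t-τ))) ≤ (τ/4) * J m := by
      rw [sn_smul, show |((4:ℝ)⁻¹)| = (4:ℝ)⁻¹ by norm_num]
      have hb := sd_bound hMsym hMpos' hMc (hD 2 (by norm_num)) (hD 3 (by norm_num))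
        (hC 3 (by norm_num)) (hC 4 (by norm_num)) t τ hτ.le
      norm_num at hb
      calc (4:ℝ)⁻¹ * opSemiNorm M (iteratedDeriv 2 u (t+τ) - (2:ℝ) • iteratedDeriv 2 u t
            + iteratedDeriv 2 u (t-τ))
          ≤ (4:ℝ)⁻¹ * (τ * ∫ s in (t-τ)..(t+τ), opSemiNorm M (iteratedDeriv 4 u s)) :=
            mul_le_mul_of_nonneg_left hb (by norm_num)
        _ = (τ/4) * J m := by rw [hJm]; ring
    rw [hdecomp]
    have t1 := sn_sub_le hMsym hMpos'
      (((τ ^ 2)⁻¹ • (u (t+τ) - (2:ℝ) • u t + u (t-τ) - (τ^2) • iteratedDeriv 2 u t))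
        + ((τ ^ 2)⁻¹ • (P 0 (t+τ) - (2:ℝ) • P 0 t + P 0 (t-τ)))
        + ((4:ℝ)⁻¹ • (f (t+τ) - (2:ℝ) • f t + f (t-τ))))
      ((4:ℝ)⁻¹ • (iteratedDeriv 2 u (t+τ) - (2:ℝ) • iteratedDeriv 2 u t
        + iteratedDeriv 2 u (t-τ)))
    have t2 := sn_add_le hMsym hMpos'
      (((τ ^ 2)⁻¹ • (u (t+τ) - (2:ℝ) • u t + u (t-τ) - (τ^2) • iteratedDeriv 2 u t))
        + ((τ ^ 2)⁻¹ • (P 0 (t+τ) - (2:ℝ) • P 0 t + P 0 (t-τ))))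
      ((4:ℝ)⁻¹ • (f (t+τ) - (2:ℝ) • f t + f (t-τ)))
    have t3 := sn_add_le hMsym hMpos'
      ((τ ^ 2)⁻¹ • (u (t+τ) - (2:ℝ) • u t + u (t-τ) - (τ^2) • iteratedDeriv 2 u t))
      ((τ ^ 2)⁻¹ • (P 0 (t+τ) - (2:ℝ) • P 0 t + P 0 (t-τ)))
    linarith
  -- sum of local integrals
  have hsplit : ∀ (φ : ℝ → ℝ), Continuous φ → (∀ s, 0 ≤ φ s) →
      (∑ j ∈ Finset.range n, ∫ s in ((↑(j+1):ℝ)*τ - τ)..((↑(j+1):ℝ)*τ + τ), φ s)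
        ≤ 2 * ∫ s in (0:ℝ)..T, φ s := by
    intro φ hφc hφnn
    have hint : ∀ a b : ℝ, IntervalIntegrable φ MeasureTheory.volume a b :=
      fun a b => hφc.intervalIntegrable a b
    set g : ℕ → ℝ := fun j => ∫ s in ((j:ℝ)*τ)..((↑(j+1):ℝ)*τ), φ s with hgdef
    have hj : ∀ j : ℕ, (∫ s in ((↑(j+1):ℝ)*τ - τ)..((↑(j+1):ℝ)*τ + τ), φ s)
        = g j + g (j+1) := by
      intro j
      have e1 : ((↑(j+1):ℝ))*τ - τ = (j:ℝ)*τ := by push_cast; ring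
      rw [e1]
      have e2 : ((↑(j+1):ℝ))*τ + τ = ((↑(j+1+1):ℝ))*τ := by push_cast; ring
      rw [e2]
      exact (intervalIntegral.integral_add_adjacent_intervals (hint _ _) (hint _ _)).symm
    rw [Finset.sum_congr rfl (fun j _ => hj j), Finset.sum_add_distrib]
    have hadj : ∀ p : ℕ, (∑ j ∈ Finset.range p, g j) = ∫ s in ((0:ℝ)*τ)..((p:ℝ)*τ), φ s := by
      intro p
      have := intervalIntegral.sum_integral_adjacent_intervals
        (a := fun k : ℕ => (k:ℝ)*τ) (μ := MeasureTheory.volume) (f := φ) (n := p)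
        (fun k _ => hint _ _)
      simpa [hgdef] using this
    have hmono : ∀ p : ℕ, p ≤ N → (∫ s in ((0:ℝ)*τ)..((p:ℝ)*τ), φ s)
        ≤ ∫ s in (0:ℝ)..T, φ s := by
      intro p hp
      rw [zero_mul]
      apply intervalIntegral.integral_mono_interval (le_refl (0:ℝ))
        (by positivity) _ (Filter.Eventually.of_forall (fun s => hφnn s)) (hint 0 T)
      rw [← hNτ]
      have : (p:ℝ) ≤ (N:ℝ) := by exact_mod_cast hp
      nlinarith
    have h1 : (∑ j ∈ Finset.range n, g j) ≤ ∫ s in (0:ℝ)..T, φ s := by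
      rw [hadj n]; exact hmono n (by omega)
    have h2 : (∑ j ∈ Finset.range n, g (j+1)) ≤ ∫ s in (0:ℝ)..T, φ s := by
      have hg0 : 0 ≤ g 0 := by
        apply intervalIntegral.integral_nonneg _ (fun s _ => hφnn s)
        push_cast
        nlinarith
      have hs' : (∑ j ∈ Finset.range (n+1), g j)
          = (∑ j ∈ Finset.range n, g (j+1)) + g 0 := Finset.sum_range_succ' g n
      have h3 : (∑ j ∈ Finset.range (n+1), g j) ≤ ∫ s in (0:ℝ)..T, φ s := by
        rw [hadj (n+1)]; exact hmono (n+1) (by omega)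
      linarith
    linarith
  have hsum : (∑ j ∈ Finset.range n, (τ * opSemiNorm M (G (j+1))))
      ≤ τ^2 * I4 + τ^2 * If + 2*C_R*H*T*B2 := by
    have hstep1 : (∑ j ∈ Finset.range n, (τ * opSemiNorm M (G (j+1))))
        ≤ ∑ j ∈ Finset.range n,
            ((5*τ^2/12) * J (j+1) + (τ^2/4) * Jf (j+1) + τ*(2*C_R*H*B2)) := by
      apply Finset.sum_le_sum
      intro j hj
      have hj' : 1 ≤ j + 1 := by omega
      have hj'' : j + 1 ≤ N - 1 := by
        have := Finset.mem_range.1 hj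
        omega
      have h := hGb (j+1) hj' hj''
      calc τ * opSemiNorm M (G (j+1))
          ≤ τ * ((5*τ/12) * J (j+1) + (τ/4) * Jf (j+1) + 2*C_R*H*B2) :=
            mul_le_mul_of_nonneg_left h hτ.le
        _ = (5*τ^2/12) * J (j+1) + (τ^2/4) * Jf (j+1) + τ*(2*C_R*H*B2) := by ring
    have hstep2 : (∑ j ∈ Finset.range n,
          ((5*τ^2/12) * J (j+1) + (τ^2/4) * Jf (j+1) + τ*(2*C_R*H*B2)))
        = (5*τ^2/12) * (∑ j ∈ Finset.range n, J (j+1))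
          + (τ^2/4) * (∑ j ∈ Finset.range n, Jf (j+1))
          + (n:ℝ) * (τ*(2*C_R*H*B2)) := by
      rw [Finset.sum_add_distrib, Finset.sum_add_distrib, ← Finset.mul_sum, ← Finset.mul_sum,
        Finset.sum_const, Finset.card_range, nsmul_eq_mul]
    have hJsum : (∑ j ∈ Finset.range n, J (j+1)) ≤ 2 * I4 := by
      have := hsplit (fun s => opSemiNorm M (iteratedDeriv 4 u s))
        (sn_continuous hMc (hC 4 le_rfl)) (fun s => sn_nonneg _ _)
      simpa [hJdef, hI4def] using this
    have hJfsum : (∑ j ∈ Finset.range n, Jf (j+1)) ≤ 2 * If := by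
      have := hsplit (fun s => opSemiNorm M (iteratedDeriv 2 f s))
        (sn_continuous hMc (hfC 2 le_rfl)) (fun s => sn_nonneg _ _)
      simpa [hJfdef, hIfdef] using this
    have hnτ : (n:ℝ) * τ ≤ T := by
      rw [← hNτ]
      have : (n:ℝ) ≤ (N:ℝ) := by exact_mod_cast (show n ≤ N by omega)
      nlinarith
    have hc1 : 0 ≤ 2*C_R*H*B2 := by positivity
    have hJnn : 0 ≤ ∑ j ∈ Finset.range n, J (j+1) := by
      apply Finset.sum_nonneg
      intro j _
      simp only [hJdef]
      apply intervalIntegral.integral_nonneg _ (fun s _ => sn_nonneg _ _)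
      linarith
    have hJfnn : 0 ≤ ∑ j ∈ Finset.range n, Jf (j+1) := by
      apply Finset.sum_nonneg
      intro j _
      simp only [hJfdef]
      apply intervalIntegral.integral_nonneg _ (fun s _ => sn_nonneg _ _)
      linarith
    linarith only [hstep1, hstep2,
      mul_le_mul_of_nonneg_left hJsum (by positivity : (0:ℝ) ≤ 5*τ^2/12),
      mul_le_mul_of_nonneg_left hJfsum (by positivity : (0:ℝ) ≤ τ^2/4),
      mul_le_mul_of_nonneg_right hnτ hc1,
      mul_nonneg (sq_nonneg τ) hI4nn, mul_nonneg (sq_nonneg τ) hIfnn]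
  -- final assembly
  set t := (n:ℝ) * τ with htdef
  have hcast1 : ((↑(n+1):ℝ)) * τ = t + τ := by rw [htdef]; push_cast; ring
  have hmemt : t ∈ Set.Icc (0:ℝ) T := htmem n (by omega)
  have hmemt1 : (t + τ) ∈ Set.Icc (0:ℝ) T := by
    rw [← hcast1]; exact htmem (n+1) (by omega)
  have hvec : τ⁻¹ • (U (n+1) - U n) - iteratedDeriv 1 u (t + τ/2)
      = (τ⁻¹ • (e (n+1) - e n)) + (τ⁻¹ • (P 0 (t+τ) - P 0 t))
        + (τ⁻¹ • (u (t+τ) - u t - τ • iteratedDeriv 1 u (t + τ/2))) := by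
    rw [hUe (n+1), hUe n]
    simp only [hWdef, hPdef, hcast1, iteratedDeriv_zero, ← htdef]
    match_scalars <;> (field_simp; try ring)
  have hT1 : opSemiNorm M (τ⁻¹ • (e (n+1) - e n))
      ≤ Real.sqrt (E 0) + ∑ j ∈ Finset.range n, (τ * opSemiNorm M (G (j+1))) := by
    rw [sn_smul, abs_of_pos (inv_pos.2 hτ)]
    have h1 := hEM n
    have h2 := hSE n hnN
    calc τ⁻¹ * opSemiNorm M (e (n+1) - e n) ≤ τ⁻¹ * (τ * Real.sqrt (E n)) :=
          mul_le_mul_of_nonneg_left h1 (inv_pos.2 hτ).le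
      _ = Real.sqrt (E n) := by field_simp
      _ ≤ _ := h2
  have hT2 : opSemiNorm M (τ⁻¹ • (P 0 (t+τ) - P 0 t)) ≤ C_R*H*B1 := by
    rw [sn_smul, abs_of_pos (inv_pos.2 hτ)]
    have hptw : ∀ s ∈ Set.Icc t (t+τ), opSemiNorm M (P (0+1) s) ≤ C_R*H*B1 := by
      intro s hs
      have hsT : s ∈ Set.Icc (0:ℝ) T :=
        ⟨le_trans hmemt.1 hs.1, le_trans hs.2 hmemt1.2⟩
      have h1 : opSemiNorm M (P (0+1) s) ≤ C_R * H * opSemiNorm K (iteratedDeriv 1 u s) := by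
        simp only [hPdef]
        exact hIII s hsT
      calc opSemiNorm M (P (0+1) s) ≤ C_R * H * opSemiNorm K (iteratedDeriv 1 u s) := h1
        _ ≤ C_R * H * B1 := mul_le_mul_of_nonneg_left (hB1b s hsT) (by positivity)
    have hb := taylor1_bound hMsym hMpos' hMc (hPd 0 (by norm_num)) (hPc 1 (by norm_num))
      t (t+τ) (by linarith) hptw
    calc τ⁻¹ * opSemiNorm M (P 0 (t+τ) - P 0 t) ≤ τ⁻¹ * (((t+τ) - t) * (C_R*H*B1)) :=
          mul_le_mul_of_nonneg_left hb (inv_pos.2 hτ).le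
      _ = C_R*H*B1 := by
          rw [show (t+τ) - t = τ by ring]
          field_simp
  have hT3 : opSemiNorm M (τ⁻¹ • (u (t+τ) - u t - τ • iteratedDeriv 1 u (t + τ/2)))
      ≤ (τ^2/8) * B3 := by
    rw [sn_smul, abs_of_pos (inv_pos.2 hτ)]
    have hb := mid_bound hMsym hMpos' hMc hD0 (hD 1 (by norm_num)) (hD 2 (by norm_num))
      (hC 1 (by norm_num)) (hC 2 (by norm_num)) (hC 3 (by norm_num)) (t + τ/2) (τ/2)
      (by linarith)
    rw [show t + τ/2 + τ/2 = t + τ by ring, show t + τ/2 - τ/2 = t by ring,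
      show 2*(τ/2) = τ by ring] at hb
    have hptw : ∀ s ∈ Set.Icc t (t+τ), opSemiNorm M (iteratedDeriv 3 u s) ≤ B3 := by
      intro s hs
      exact hB3b s ⟨le_trans hmemt.1 hs.1, le_trans hs.2 hmemt1.2⟩
    have hint : (∫ s in t..(t+τ), opSemiNorm M (iteratedDeriv 3 u s)) ≤ τ * B3 := by
      have h := integral_le_of_bound (a := t) (b := t+τ) (by linarith)
        (sn_continuous hMc (hC 3 (by norm_num))) hptw
      rw [show (t+τ) - t = τ by ring] at h
      exact h
    have hb2 : opSemiNorm M (u (t+τ) - u t - τ • iteratedDeriv 1 u (t + τ/2))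
        ≤ ((τ/2)^2/2) * (τ * B3) := by
      calc opSemiNorm M (u (t+τ) - u t - τ • iteratedDeriv 1 u (t + τ/2))
          ≤ ((τ/2)^2/2) * ∫ s in t..(t+τ), opSemiNorm M (iteratedDeriv 3 u s) := hb
        _ ≤ ((τ/2)^2/2) * (τ * B3) := mul_le_mul_of_nonneg_left hint (by positivity)
    calc τ⁻¹ * opSemiNorm M (u (t+τ) - u t - τ • iteratedDeriv 1 u (t + τ/2))
        ≤ τ⁻¹ * (((τ/2)^2/2) * (τ * B3)) := mul_le_mul_of_nonneg_left hb2 (inv_pos.2 hτ).le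
      _ = (τ^2/8) * B3 := by field_simp; ring
  rw [hvec]
  have htr1 := sn_add_le hMsym hMpos'
    ((τ⁻¹ • (e (n+1) - e n)) + (τ⁻¹ • (P 0 (t+τ) - P 0 t)))
    (τ⁻¹ • (u (t+τ) - u t - τ • iteratedDeriv 1 u (t + τ/2)))
  have htr2 := sn_add_le hMsym hMpos' (τ⁻¹ • (e (n+1) - e n)) (τ⁻¹ • (P 0 (t+τ) - P 0 t))
  have hLHS : opSemiNorm M ((τ⁻¹ • (e (n+1) - e n)) + (τ⁻¹ • (P 0 (t+τ) - P 0 t))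
      + (τ⁻¹ • (u (t+τ) - u t - τ • iteratedDeriv 1 u (t + τ/2))))
      ≤ X1 + X2 + τ^2 * I4 + τ^2 * If + 2*C_R*H*T*B2 + C_R*H*B1 + (τ^2/8)*B3 := by
    linarith only [htr1, htr2, hT1, hT2, hT3, hE0, hsum]
  have hfin : X1 + X2 + τ^2 * I4 + τ^2 * If + 2*C_R*H*T*B2 + C_R*H*B1 + (τ^2/8)*B3
      ≤ (2*C_R + 2) * (X1 + X2 + τ^2*(I4 + If + H*I2K + B3) + H*((T + τ)*B2 + B1)) := by
    linarith only [hX1nn, hX2nn, mul_nonneg hCR.le hX1nn, mul_nonneg hCR.le hX2nn,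
      mul_nonneg hCR.le (mul_nonneg (sq_nonneg τ) hI4nn),
      mul_nonneg hCR.le (mul_nonneg (sq_nonneg τ) hIfnn),
      mul_nonneg (sq_nonneg τ) hI4nn, mul_nonneg (sq_nonneg τ) hIfnn,
      mul_nonneg (mul_nonneg hCR.le (sq_nonneg τ)) (mul_nonneg hH.le hI2Knn),
      mul_nonneg (sq_nonneg τ) (mul_nonneg hH.le hI2Knn),
      mul_nonneg (sq_nonneg τ) hB3nn,
      mul_nonneg hCR.le (mul_nonneg (sq_nonneg τ) hB3nn),
      mul_nonneg (mul_nonneg hH.le hB2nn) hτ.le,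
      mul_nonneg hCR.le (mul_nonneg (mul_nonneg hH.le hB2nn) hτ.le),
      mul_nonneg (mul_nonneg hH.le hB2nn) hT.le,
      mul_nonneg hCR.le (mul_nonneg hH.le hB1nn),
      mul_nonneg hH.le hB1nn]
  linarith only [hLHS, hfin]
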